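/- Let c, Λ ∈ ℝ with sin(2Λ) ≠ 0, sin(3c/2 − Λ) ≠ 0, cot(2Λ) + cot(3c/2 − Λ) ≠ 0. Suppose h ∈ ℝ satisfies h = (cos(3c) − cos(2Λ))·csc(2Λ)/√3 and h² = (√3·h − sin(2Λ + 3c)) / (6(cot(2Λ) + cot(3c/2 − Λ))). Then csc²(2Λ)·(cos(3c) − cos(2Λ))·(−9cos(2Λ) + cos(6Λ) + 8cos(3c)) = 0. -/

import Mathlib

open Real

/-- Substituting the explicit formula for `h` into the quadratic relation yields the
trigonometric compatibility condition. -/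
theorem compatibility_condition (c Λ h : ℝ)
    (h2Λ : sin (2 * Λ) ≠ 0) (hs : sin (3 * c / 2 - Λ) ≠ 0)
    (hcot : cos (2 * Λ) / sin (2 * Λ) + cos (3 * c / 2 - Λ) / sin (3 * c / 2 - Λ) ≠ 0)
    (e1 : h = (cos (3 * c) - cos (2 * Λ)) * (1 / sin (2 * Λ)) / Real.sqrt 3)
    (e2 : h ^ 2 = (Real.sqrt 3 * h - sin (2 * Λ + 3 * c)) /
      (6 * (cos (2 * Λ) / sin (2 * Λ) + cos (3 * c / 2 - Λ) / sin (3 * c / 2 - Λ)))) :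
    (1 / sin (2 * Λ)) ^ 2 * (cos (3 * c) - cos (2 * Λ)) *
      (-9 * cos (2 * Λ) + cos (6 * Λ) + 8 * cos (3 * c)) = 0 := by
  set sx := sin (3 * c / 2) with hsx
  set cx := cos (3 * c / 2) with hcx
  set sy := sin Λ with hsy
  set cy := cos Λ with hcy
  have hx : sx ^ 2 + cx ^ 2 = 1 := sin_sq_add_cos_sq _
  have hy : sy ^ 2 + cy ^ 2 = 1 := sin_sq_add_cos_sq _
  have hS : sin (2 * Λ) = 2 * sy * cy := sin_two_mul Λ
  have hC : cos (2 * Λ) = cy ^ 2 - sy ^ 2 := by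
    rw [cos_two_mul']
  have h3c : cos (3 * c) = cx ^ 2 - sx ^ 2 := by
    rw [show (3 : ℝ) * c = 2 * (3 * c / 2) by ring, cos_two_mul']
  have hs3c : sin (3 * c) = 2 * sx * cx := by
    rw [show (3 : ℝ) * c = 2 * (3 * c / 2) by ring, sin_two_mul]
  have hW : sin (2 * Λ + 3 * c) =
      2 * sy * cy * (cx ^ 2 - sx ^ 2) + (cy ^ 2 - sy ^ 2) * (2 * sx * cx) := by
    rw [sin_add, hS, h3c, hs3c, hC]
  have hM : sin (3 * c / 2 - Λ) = sx * cy - cx * sy := sin_sub _ _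
  have hcM : cos (3 * c / 2 - Λ) = cx * cy + sx * sy := cos_sub _ _
  have hP : sin (3 * c / 2 + Λ) = sx * cy + cx * sy := sin_add _ _
  have h6 : cos (6 * Λ) = 4 * (cy ^ 2 - sy ^ 2) ^ 3 - 3 * (cy ^ 2 - sy ^ 2) := by
    rw [show (6 : ℝ) * Λ = 3 * (2 * Λ) by ring, cos_three_mul, hC]
  -- abbreviations
  set A := cx ^ 2 - sx ^ 2 - (cy ^ 2 - sy ^ 2) with hA
  set S := 2 * sy * cy with hSdef
  set P := sx * cy + cx * sy with hPdef
  set M := sx * cy - cx * sy with hMdef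
  set W := S * (cx ^ 2 - sx ^ 2) + (cy ^ 2 - sy ^ 2) * (2 * sx * cx) with hWdef
  have hSne : S ≠ 0 := by rw [← hS]; exact h2Λ
  have hMne : M ≠ 0 := by rw [← hM]; exact hs
  -- P ≠ 0
  have hPne : P ≠ 0 := by
    have hPeq : P = (cos (2 * Λ) / sin (2 * Λ) + cos (3 * c / 2 - Λ) / sin (3 * c / 2 - Λ))
        * (S * M) := by
      rw [hC, hM, hcM, hS]
      field_simp
      linear_combination (-(sx * cy + cx * sy)) * hy
    rw [hPeq]
    exact mul_ne_zero hcot (mul_ne_zero hSne hMne)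
  -- substitute e1 into e2
  have h3nn : (0:ℝ) ≤ 3 := by norm_num
  have hsqh : h ^ 2 = (cos (3 * c) - cos (2 * Λ)) ^ 2 * (1 / sin (2 * Λ)) ^ 2 / 3 := by
    rw [e1, div_pow, mul_pow, Real.sq_sqrt h3nn]
  have hsq3 : Real.sqrt 3 ≠ 0 := by positivity
  have hsh : Real.sqrt 3 * h = (cos (3 * c) - cos (2 * Λ)) * (1 / sin (2 * Λ)) := by
    rw [e1]; field_simp
  have e2' : h ^ 2 * (6 * (cos (2 * Λ) / sin (2 * Λ) + cos (3 * c / 2 - Λ) / sin (3 * c / 2 - Λ)))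
      = Real.sqrt 3 * h - sin (2 * Λ + 3 * c) := by
    rw [e2]; exact div_mul_cancel₀ _ (mul_ne_zero (by norm_num) hcot)
  rw [hsqh, hsh, hW, h3c, hC, hM, hcM, hS] at e2'
  field_simp at e2'
  have h0 : (cx ^ 2 - sx ^ 2 - (cy ^ 2 - sy ^ 2)) *
      (-9 * (cy ^ 2 - sy ^ 2) + (4 * (cy ^ 2 - sy ^ 2) ^ 3 - 3 * (cy ^ 2 - sy ^ 2)) +
        8 * (cx ^ 2 - sx ^ 2)) * (P * (3 * S)) = 0 := by
    linear_combination 4 * S * e2' + ((48) * cx * sy ^ 2 * cy + (72) * cx * sy ^ 2 * cy ^ 3 + (-96) * cx * sy ^ 2 * cy ^ 5 + (-24) * cx * sy ^ 2 * cy ^ 7 + (-168) * cx * sy ^ 4 * cy + (96) * cx * sy ^ 4 * cy ^ 3 + (72) * cx * sy ^ 4 * cy ^ 5 + (-384) * cx * sy ^ 4 * cy ^ 7 + (96) * cx * sy ^ 6 * cy + (-72) * cx * sy ^ 6 * cy ^ 3 + (24) * cx * sy ^ 8 * cy + (-144) * cx ^ 3 * sy ^ 2 * cy + (144) * cx ^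 3 * sy ^ 2 * cy ^ 3 + (144) * cx ^ 3 * sy ^ 4 * cy + (48) * sx * sy * cy ^ 2 + (72) * sx * sy * cy ^ 4 + (-96) * sx * sy * cy ^ 6 + (-24) * sx * sy * cy ^ 8 + (-168) * sx * sy ^ 3 * cy ^ 2 + (-96) * sx * sy ^ 3 * cy ^ 4 + (72) * sx * sy ^ 3 * cy ^ 6 + (96) * sx * sy ^ 5 * cy ^ 2 + (-72) * sx * sy ^ 5 * cy ^ 4 + (384) * sx * sy ^ 5 * cy ^ 6 + (24) * sx * sy ^ 7 * cy ^ 2 + (-144) * sx * cx ^ 2 * sy * cy ^ 2 + (144) * sx * cx ^ 2 * sy * cy ^ 4 + (144) * sx * cx ^ 2 * sy ^ 3 * cy ^ 2 + (48) * sx ^ 2 * cx * sy ^ 2 * cy + (-48) * sx ^ 2 * cx * sy ^ 2 * cy ^ 3 + (-48) * sx ^ 2 * cx * sy ^ 4 * cy + (48) * sx ^ 3 * sy * cy ^ 2 + (-48) * sx ^ 3 * sy * cy ^ 4 + (-48) * sx ^ 3 * sy ^ 3 * cy ^ 2) * hx + ((-48) * cx * sy ^ 2 * cy + (-120) * cx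 * sy ^ 2 * cy ^ 3 + (-96) * cx * sy ^ 2 * cy ^ 5 + (-24) * cx * sy ^ 2 * cy ^ 7 + (120) * cx * sy ^ 4 * cy + (48) * cx * sy ^ 4 * cy ^ 3 + (-264) * cx * sy ^ 4 * cy ^ 5 + (-48) * cx * sy ^ 6 * cy + (120) * cx * sy ^ 6 * cy ^ 3 + (-24) * cx * sy ^ 8 * cy + (192) * cx ^ 3 * sy ^ 2 * cy + (240) * cx ^ 3 * sy ^ 2 * cy ^ 3 + (48) * cx ^ 3 * sy ^ 2 * cy ^ 5 + (-240) * cx ^ 3 * sy ^ 4 * cy + (192) * cx ^ 3 * sy ^ 4 * cy ^ 3 + (384) * cx ^ 3 * sy ^ 4 * cy ^ 5 + (-48) * cx ^ 3 * sy ^ 6 * cy + (-192) * cx ^ 5 * sy ^ 2 * cy + (-48) * sx * sy * cy ^ 2 + (-120) * sx * sy * cy ^ 4 + (-96) * sx * sy * cy ^ 6 + (-24) * sx * sy * cy ^ 8 + (120) * sx * sy ^ 3 * cy ^ 2 + (240) * sx * sy ^ 3 * cy ^ 4 + (120) * sx * sy ^ 3 * cy ^ 6 + (-48) * sx * sy ^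 5 * cy ^ 2 + (120) * sx * sy ^ 5 * cy ^ 4 + (-24) * sx * sy ^ 7 * cy ^ 2 + (192) * sx * cx ^ 2 * sy * cy ^ 2 + (240) * sx * cx ^ 2 * sy * cy ^ 4 + (48) * sx * cx ^ 2 * sy * cy ^ 6 + (-240) * sx * cx ^ 2 * sy ^ 3 * cy ^ 2 + (-192) * sx * cx ^ 2 * sy ^ 3 * cy ^ 4 + (-48) * sx * cx ^ 2 * sy ^ 5 * cy ^ 2 + (-384) * sx * cx ^ 2 * sy ^ 5 * cy ^ 4 + (-192) * sx * cx ^ 4 * sy * cy ^ 2) * hy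
  have h1 : (cx ^ 2 - sx ^ 2 - (cy ^ 2 - sy ^ 2)) *
      (-9 * (cy ^ 2 - sy ^ 2) + (4 * (cy ^ 2 - sy ^ 2) ^ 3 - 3 * (cy ^ 2 - sy ^ 2)) +
        8 * (cx ^ 2 - sx ^ 2)) = 0 := by
    rcases mul_eq_zero.mp h0 with h1 | h1
    · exact h1
    · exact absurd h1 (mul_ne_zero hPne (mul_ne_zero three_ne_zero hSne))
  rw [h3c, hC, h6, hS]
  linear_combination (1 / S) ^ 2 * h1
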